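/- arXiv:1009.2312 — 5 statements merged into one kernel-verified Lean document; each statement's English description precedes it below -/
import Mathlib

section
/- Let ‖·‖ be a strongly convex Minkowski norm on ℝⁿ with approximating inner products g_x for x ≠ 0 given by the Hessian of ‖·‖²/2. Then the 2-uniform convexity constant C equals sup over nonzero x, y of ‖y‖ / g_x(y,y)^{1/2}, and the 2-uniform smoothness constant S equals sup over nonzero x, y of g_x(y,y)^{1/2} / ‖y‖. -/
open Filter Topology


section aux
variable {E : Type*} [NormedAddCommGroup E] [NormedSpace ℝ E]
variable {N : E → ℝ} {DN : E → (E →L[ℝ] ℝ)} {g : E → (E →L[ℝ] E →L[ℝ] ℝ)}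

lemma mylineDerivF (hD : ∀ x, x ≠ 0 → HasFDerivAt (fun y => N y ^ 2 / 2) (DN x) x)
    {x v : E} {t : ℝ} (h : x + t • v ≠ 0) :
    HasDerivAt (fun s : ℝ => N (x + s • v) ^ 2 / 2) (DN (x + t • v) v) t := by
  have h1 : HasDerivAt (fun s : ℝ => x + s • v) v t := by
    simpa using ((hasDerivAt_id t).smul_const v).const_add x
  have h2 := (hD _ h).comp_hasDerivAt t h1
  exact h2

lemma mylineDerivDN (hg : ∀ x, x ≠ 0 → HasFDerivAt DN (g x) x)
    {x v : E} {t : ℝ} (h : x + t • v ≠ 0) :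
    HasDerivAt (fun s : ℝ => DN (x + s • v)) (g (x + t • v) v) t := by
  have h1 : HasDerivAt (fun s : ℝ => x + s • v) v t := by
    simpa using ((hasDerivAt_id t).smul_const v).const_add x
  have h2 := (hg _ h).comp_hasDerivAt t h1
  exact h2

end aux
section aux2
variable {E : Type*} [NormedAddCommGroup E] [NormedSpace ℝ E]
variable {N : E → ℝ} {DN : E → (E →L[ℝ] ℝ)} {g : E → (E →L[ℝ] E →L[ℝ] ℝ)}

lemma myN0 (hhom : ∀ c : ℝ, 0 < c → ∀ x, N (c • x) = c * N x) : N 0 = 0 := by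
  have := hhom 2 (by norm_num) 0
  simp at this
  linarith

lemma myDNself (hhom : ∀ c : ℝ, 0 < c → ∀ x, N (c • x) = c * N x)
    (hD : ∀ x, x ≠ 0 → HasFDerivAt (fun y => N y ^ 2 / 2) (DN x) x)
    {x : E} (hx : x ≠ 0) : DN x x = N x ^ 2 := by
  have h1 : HasDerivAt (fun s : ℝ => N (s • x) ^ 2 / 2) (DN x x) 1 := by
    have := mylineDerivF (x := 0) (v := x) (t := 1) hD (by simpa using hx)
    simpa using this
  have h2 : HasDerivAt (fun s : ℝ => s ^ 2 * (N x ^ 2 / 2)) (N x ^ 2) 1 := by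
    have := (hasDerivAt_pow 2 (1:ℝ)).mul_const (N x ^ 2 / 2)
    refine this.congr_deriv ?_
    ring
  have heq : (fun s : ℝ => N (s • x) ^ 2 / 2) =ᶠ[nhds (1:ℝ)]
      (fun s : ℝ => s ^ 2 * (N x ^ 2 / 2)) := by
    filter_upwards [Ioi_mem_nhds (by norm_num : (0:ℝ) < 1)] with s hs
    have := hhom s hs x
    rw [this]; ring
  have h1' : HasDerivAt (fun s : ℝ => s ^ 2 * (N x ^ 2 / 2)) (DN x x) 1 :=
    h1.congr_of_eventuallyEq heq.symm
  exact h1'.unique h2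

lemma myDNhomog (hhom : ∀ c : ℝ, 0 < c → ∀ x, N (c • x) = c * N x)
    (hD : ∀ x, x ≠ 0 → HasFDerivAt (fun y => N y ^ 2 / 2) (DN x) x)
    {x : E} (hx : x ≠ 0) {t : ℝ} (ht : 0 < t) : DN (t • x) = t • DN x := by
  have hN0 : N 0 = 0 := myN0 hhom
  have htx : t • x ≠ 0 := smul_ne_zero (ne_of_gt ht) hx
  have hfun : (fun y : E => N (t • y) ^ 2 / 2) = (fun y => t ^ 2 * (N y ^ 2 / 2)) := by
    funext y
    rw [hhom t ht y]; ring
  have hA : HasFDerivAt (fun y : E => N (t • y) ^ 2 / 2)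
      ((DN (t • x)).comp (t • ContinuousLinearMap.id ℝ E)) x := by
    have hsm : HasFDerivAt (fun y : E => t • y) (t • ContinuousLinearMap.id ℝ E) x :=
      (hasFDerivAt_id x).const_smul t
    exact (hD _ htx).comp x hsm
  have hB : HasFDerivAt (fun y : E => t ^ 2 * (N y ^ 2 / 2)) ((t ^ 2) • DN x) x :=
    (hD _ hx).const_smul (t ^ 2)
  rw [hfun] at hA
  have := hA.unique hB
  ext w
  have hw := congrArg (fun (L : E →L[ℝ] ℝ) => L w) this
  simp at hw
  have : t * (DN (t • x)) w = t * (t * DN x w) := by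
    rw [hw]; ring
  have := mul_left_cancel₀ (ne_of_gt ht) this
  simpa using this

lemma mygself (hhom : ∀ c : ℝ, 0 < c → ∀ x, N (c • x) = c * N x)
    (hD : ∀ x, x ≠ 0 → HasFDerivAt (fun y => N y ^ 2 / 2) (DN x) x)
    (hg : ∀ x, x ≠ 0 → HasFDerivAt DN (g x) x)
    {x : E} (hx : x ≠ 0) : g x x x = N x ^ 2 := by
  have h1 : HasDerivAt (fun s : ℝ => DN (s • x)) (g x x) 1 := by
    have := mylineDerivDN (x := 0) (v := x) (t := 1) hg (by simpa using hx)
    simpa using this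
  have h2 : HasDerivAt (fun s : ℝ => s • DN x) (DN x) 1 := by
    simpa using (hasDerivAt_id (1:ℝ)).smul_const (DN x)
  have heq : (fun s : ℝ => DN (s • x)) =ᶠ[nhds (1:ℝ)] (fun s : ℝ => s • DN x) := by
    filter_upwards [Ioi_mem_nhds (by norm_num : (0:ℝ) < 1)] with s hs
    exact myDNhomog hhom hD hx hs
  have h1' : HasDerivAt (fun s : ℝ => s • DN x) (g x x) 1 :=
    h1.congr_of_eventuallyEq heq.symm
  have := h1'.unique h2
  rw [this, myDNself hhom hD hx]

end aux2



section aux3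
variable {E : Type*} [NormedAddCommGroup E] [NormedSpace ℝ E]
variable {N : E → ℝ} {DN : E → (E →L[ℝ] ℝ)} {g : E → (E →L[ℝ] E →L[ℝ] ℝ)}

lemma mylineDerivF' (hD : ∀ x, x ≠ 0 → HasFDerivAt (fun y => N y ^ 2 / 2) (DN x) x)
    {x v : E} {t : ℝ} (h : x + t • v ≠ 0) :
    HasDerivAt (fun s : ℝ => N (x + s • v) ^ 2 / 2) (DN (x + t • v) v) t := by
  have h1 : HasDerivAt (fun s : ℝ => x + s • v) v t := by
    simpa using ((hasDerivAt_id t).smul_const v).const_add x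
  have h2 := (hD _ h).comp_hasDerivAt t h1
  exact h2

set_option maxHeartbeats 1000000 in
lemma mysecdiff (hD : ∀ x, x ≠ 0 → HasFDerivAt (fun y => N y ^ 2 / 2) (DN x) x)
    (hg : ∀ x, x ≠ 0 → HasFDerivAt DN (g x) x)
    {x y : E} (hx : x ≠ 0) :
    Tendsto (fun t : ℝ =>
        (N (x + t • y) ^ 2 / 2 + N (x - t • y) ^ 2 / 2 - N x ^ 2) / t ^ 2)
      (nhdsWithin 0 (Set.Ioi 0)) (nhds (g x y y)) := by
  by_cases hy : y = 0
  · subst hy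
    simp only [smul_zero, add_zero, sub_zero]
    have : (fun t : ℝ => (N x ^ 2 / 2 + N x ^ 2 / 2 - N x ^ 2) / t ^ 2) = fun _ => (0:ℝ) := by
      funext t; ring_nf
    rw [this]
    simpa using tendsto_const_nhds
  · rw [Metric.tendsto_nhdsWithin_nhds]
    intro ε hε
    set ε₁ : ℝ := ε / (4 * (‖y‖ ^ 2 + 1)) with hε₁def
    have hy2 : (0:ℝ) < ‖y‖ ^ 2 + 1 := by positivity
    have hε₁ : 0 < ε₁ := by positivity
    have hlo := (hasFDerivAt_iff_isLittleO_nhds_zero.mp (hg x hx)).def hε₁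
    rw [Metric.eventually_nhds_iff] at hlo
    obtain ⟨δ₁, hδ₁, hball⟩ := hlo
    have hyn : (0:ℝ) < ‖y‖ + 1 := by positivity
    have hxpos : (0:ℝ) < ‖x‖ := norm_pos_iff.mpr hx
    refine ⟨min (δ₁ / (‖y‖ + 1)) (‖x‖ / (‖y‖ + 1)),
      lt_min (by positivity) (by positivity), ?_⟩
    intro t ht hdist
    rw [Real.dist_eq, sub_zero] at hdist
    have ht0 : 0 < t := ht
    have htabs : |t| = t := abs_of_pos ht0
    rw [htabs] at hdist
    have hty1 : t * ‖y‖ < δ₁ := by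
      have h1 : t < δ₁ / (‖y‖ + 1) := lt_of_lt_of_le hdist (min_le_left _ _)
      have h2 := (lt_div_iff₀ hyn).mp h1
      nlinarith [norm_nonneg y]
    have hty2 : t * ‖y‖ < ‖x‖ := by
      have h1 : t < ‖x‖ / (‖y‖ + 1) := lt_of_lt_of_le hdist (min_le_right _ _)
      have h2 := (lt_div_iff₀ hyn).mp h1
      nlinarith [norm_nonneg y]
    -- key estimates on [0, t]
    have hsmall : ∀ s : ℝ, s ∈ Set.Icc 0 t → ∀ v : E, ‖v‖ = ‖y‖ →
        (x + s • v ≠ 0 ∧ ‖DN (x + s • v) - DN x - g x (s • v)‖ ≤ ε₁ * (s * ‖y‖)) := by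
      intro s hs v hv
      have hs0 : 0 ≤ s := hs.1
      have hst : s ≤ t := hs.2
      have hsv : ‖s • v‖ = s * ‖y‖ := by
        rw [norm_smul, hv, Real.norm_eq_abs, abs_of_nonneg hs0]
      have hsvt : s * ‖y‖ ≤ t * ‖y‖ := by nlinarith [norm_nonneg y]
      constructor
      · intro hcon
        have hxe : x = -(s • v) := by
          have : x + s • v - s • v = 0 - s • v := by rw [hcon]
          simpa using this
        rw [hxe, norm_neg, hsv] at hty2
        have hsvt2 : s * ‖y‖ ≤ t * ‖y‖ := by nlinarith [norm_nonneg y]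
        linarith
      · have hd : dist (s • v) 0 < δ₁ := by
          rw [dist_zero_right, hsv]; linarith
        have := hball hd
        rw [hsv] at this
        exact this
    -- derivative of ψ
    set G : ℝ := g x y y with hGdef
    set ψ : ℝ → ℝ := fun s =>
      N (x + s • y) ^ 2 / 2 + N (x + s • (-y)) ^ 2 / 2 - N x ^ 2 - s ^ 2 * G with hψdef
    set Dψ : ℝ → ℝ := fun s => DN (x + s • y) y + DN (x + s • (-y)) (-y) - 2 * s * G with hDψdef
    have hderiv : ∀ s ∈ Set.Icc (0:ℝ) t, HasDerivAt ψ (Dψ s) s := by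
      intro s hs
      have hp := (hsmall s hs y rfl).1
      have hm := (hsmall s hs (-y) (norm_neg y)).1
      have d1 := mylineDerivF' hD (x := x) (v := y) (t := s) hp
      have d2 := mylineDerivF' hD (x := x) (v := -y) (t := s) hm
      have d3 : HasDerivAt (fun s : ℝ => s ^ 2 * G) (2 * s * G) s := by
        have := (hasDerivAt_pow 2 s).mul_const G
        refine this.congr_deriv ?_
        ring
      have := ((d1.add d2).sub_const (N x ^ 2)).sub d3
      simpa [hψdef, hDψdef, Pi.sub_def, Pi.add_def] using this
    have hDbound : ∀ s ∈ Set.Icc (0:ℝ) t, ‖Dψ s‖ ≤ 2 * ε₁ * ‖y‖ ^ 2 * t := by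
      intro s hs
      obtain ⟨hp, hep⟩ := hsmall s hs y rfl
      obtain ⟨hm, hem⟩ := hsmall s hs (-y) (norm_neg y)
      have hs0 : 0 ≤ s := hs.1
      set ep : E →L[ℝ] ℝ := DN (x + s • y) - DN x - g x (s • y) with hepdef
      set em : E →L[ℝ] ℝ := DN (x + s • (-y)) - DN x - g x (s • (-y)) with hemdef
      have hv1 : DN (x + s • y) y = DN x y + s * G + ep y := by
        simp only [hepdef, hGdef, ContinuousLinearMap.sub_apply, ContinuousLinearMap.map_smul,
          ContinuousLinearMap.coe_smul', Pi.smul_apply, smul_eq_mul]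
        ring
      have hv2 : DN (x + s • (-y)) (-y) = -(DN x y) + s * G - em y := by
        have : DN (x + s • (-y)) (-y) = -(DN (x + s • (-y)) y) := by
          rw [map_neg]
        rw [this]
        have h2 : DN (x + s • (-y)) y = DN x y - s * G + em y := by
          simp only [hemdef, hGdef, ContinuousLinearMap.sub_apply, smul_neg,
            ContinuousLinearMap.map_neg, ContinuousLinearMap.map_smul, ContinuousLinearMap.neg_apply,
            ContinuousLinearMap.coe_smul', Pi.smul_apply, smul_eq_mul]
          ring
        rw [h2]; ring
      have hval : Dψ s = ep y - em y := by
        rw [hDψdef]; simp only []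
        rw [hv1, hv2]; ring
      rw [hval]
      have b1 : |ep y| ≤ ε₁ * (s * ‖y‖) * ‖y‖ := by
        calc |ep y| ≤ ‖ep‖ * ‖y‖ := ep.le_opNorm y
        _ ≤ ε₁ * (s * ‖y‖) * ‖y‖ := by
            apply mul_le_mul_of_nonneg_right hep (norm_nonneg y)
      have b2 : |em y| ≤ ε₁ * (s * ‖y‖) * ‖y‖ := by
        calc |em y| ≤ ‖em‖ * ‖y‖ := em.le_opNorm y
        _ ≤ ε₁ * (s * ‖y‖) * ‖y‖ := by
            apply mul_le_mul_of_nonneg_right hem (norm_nonneg y)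
      have : ‖ep y - em y‖ ≤ |ep y| + |em y| := norm_sub_le _ _
      have hst : s ≤ t := hs.2
      have : |ep y - em y| ≤ 2 * (ε₁ * (s * ‖y‖) * ‖y‖) := by
        calc |ep y - em y| ≤ |ep y| + |em y| := abs_sub _ _
        _ ≤ 2 * (ε₁ * (s * ‖y‖) * ‖y‖) := by linarith
      calc ‖ep y - em y‖ ≤ 2 * (ε₁ * (s * ‖y‖) * ‖y‖) := this
      _ ≤ 2 * ε₁ * ‖y‖ ^ 2 * t := by
            have h0 : 0 ≤ ε₁ * ‖y‖ ^ 2 * (t - s) :=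
              mul_nonneg (mul_nonneg hε₁.le (sq_nonneg _)) (by linarith)
            nlinarith [h0]
    have hmvt := Convex.norm_image_sub_le_of_norm_hasDerivWithin_le
      (f := ψ) (f' := Dψ) (C := 2 * ε₁ * ‖y‖ ^ 2 * t)
      (fun s hs => (hderiv s hs).hasDerivWithinAt) hDbound (convex_Icc 0 t)
      (Set.left_mem_Icc.mpr ht0.le) (Set.right_mem_Icc.mpr ht0.le)
    have hψ0 : ψ 0 = 0 := by
      simp [hψdef]
    rw [hψ0, sub_zero, sub_zero] at hmvt
    have hψt : |ψ t| ≤ 2 * ε₁ * ‖y‖ ^ 2 * t * t := by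
      calc |ψ t| ≤ 2 * ε₁ * ‖y‖ ^ 2 * t * ‖t‖ := hmvt
      _ = 2 * ε₁ * ‖y‖ ^ 2 * t * t := by rw [Real.norm_eq_abs, htabs]
    -- conclude
    have hQ : (N (x + t • y) ^ 2 / 2 + N (x - t • y) ^ 2 / 2 - N x ^ 2) / t ^ 2 - G
        = ψ t / t ^ 2 := by
      rw [hψdef]
      simp only []
      have hxy : x - t • y = x + t • (-y) := by
        rw [smul_neg, sub_eq_add_neg]
      rw [hxy]
      field_simp
    rw [Real.dist_eq, hQ]
    have ht2 : (0:ℝ) < t ^ 2 := by positivity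
    rw [abs_div, abs_of_pos ht2]
    rw [div_lt_iff₀ ht2]
    have hfin : 2 * ε₁ * ‖y‖ ^ 2 * t * t < ε * t ^ 2 := by
      have : ε₁ * ‖y‖ ^ 2 < ε / 2 := by
        rw [hε₁def]
        rw [div_mul_eq_mul_div, div_lt_div_iff₀ (by positivity) (by norm_num)]
        nlinarith [sq_nonneg ‖y‖]
      nlinarith
    calc |ψ t| ≤ 2 * ε₁ * ‖y‖ ^ 2 * t * t := hψt
    _ < ε * t ^ 2 := hfin

end aux3



section aux4
variable {E : Type*} [NormedAddCommGroup E] [NormedSpace ℝ E]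
variable {N : E → ℝ} {DN : E → (E →L[ℝ] ℝ)} {g : E → (E →L[ℝ] E →L[ℝ] ℝ)}


lemma myconvglobal
    (hhom : ∀ c : ℝ, 0 < c → ∀ x, N (c • x) = c * N x)
    (hnonneg : ∀ x, 0 ≤ N x)
    (hD : ∀ x, x ≠ 0 → HasFDerivAt (fun y => N y ^ 2 / 2) (DN x) x)
    (hg : ∀ x, x ≠ 0 → HasFDerivAt DN (g x) x)
    (hN0 : N 0 = 0)
    (hgself : ∀ z : E, z ≠ 0 → g z z z = N z ^ 2)
    {K : ℝ} (hK0 : 0 ≤ K) (hK1 : K ≤ 1)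
    (hKg : ∀ z, z ≠ 0 → ∀ u : E, K * N u ^ 2 ≤ g z u u) :
    ∀ m u : E, N m ^ 2 + K * N u ^ 2 ≤ N (m + u) ^ 2 / 2 + N (m - u) ^ 2 / 2 := by
  intro m u
  by_cases hu : u = 0
  · subst hu
    simp [hN0]
  by_cases hmu : ∃ s : ℝ, m = s • u
  · obtain ⟨s, rfl⟩ := hmu
    have hA : (0:ℝ) ≤ N u ^ 2 := sq_nonneg _
    have hFpos : ∀ c : ℝ, 0 ≤ c → N (c • u) ^ 2 = c ^ 2 * N u ^ 2 := by
      intro c hc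
      rcases eq_or_lt_of_le hc with h | h
      · rw [← h]; simp [hN0]
      · rw [hhom c h u]; ring
    have hFneg : ∀ c : ℝ, c ≤ 0 → N (c • u) ^ 2 = c ^ 2 * N (-u) ^ 2 := by
      intro c hc
      rcases eq_or_lt_of_le hc with h | h
      · rw [h]; simp [hN0]
      · have hcu : c • u = (-c) • (-u) := by module
        rw [hcu, hhom (-c) (by linarith) (-u)]; ring
    have hgneg : ∀ z : E, g z (-u) (-u) = g z u u := by
      intro z; simp
    have hKub : K * N u ^ 2 ≤ N (-u) ^ 2 := by
      have h1 := hKg (-u) (neg_ne_zero.mpr hu) u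
      have h2 := hgself (-u) (neg_ne_zero.mpr hu)
      rw [← hgneg (-u)] at h1
      rw [h2] at h1
      exact h1
    have h1 : s • u + u = (s + 1) • u := by module
    have h2 : s • u - u = (s - 1) • u := by module
    rw [h1, h2]
    rcases le_or_gt 1 s with hs | hs
    · rw [hFpos s (by linarith), hFpos (s+1) (by linarith), hFpos (s-1) (by linarith)]
      nlinarith [mul_nonneg (sub_nonneg.mpr hK1) hA]
    rcases le_or_gt s (-1) with hs' | hs'
    · rw [hFneg s (by linarith), hFneg (s+1) (by linarith), hFneg (s-1) (by linarith)]
      nlinarith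
    rcases le_or_gt 0 s with hs0 | hs0
    · rw [hFpos s hs0, hFpos (s+1) (by linarith), hFneg (s-1) (by linarith)]
      have hint1 : 0 ≤ (s - 1) ^ 2 * (N (-u) ^ 2 - K * N u ^ 2) :=
        mul_nonneg (sq_nonneg _) (by linarith)
      have h1p : (0:ℝ) ≤ 1 + 2 * s - s ^ 2 := by nlinarith
      have hint2 : 0 ≤ (N u ^ 2 * (1 - K)) * (1 + 2 * s - s ^ 2) :=
        mul_nonneg (mul_nonneg hA (by linarith)) h1p
      nlinarith [hint1, hint2]
    · rw [hFneg s (by linarith), hFpos (s+1) (by linarith), hFneg (s-1) (by linarith)]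
      have h2p : (0:ℝ) ≤ 1 - 2 * s - s ^ 2 := by nlinarith
      have hint1 : 0 ≤ (1 - 2 * s - s ^ 2) * (N (-u) ^ 2 - K * N u ^ 2) :=
        mul_nonneg h2p (by linarith)
      have hint2 : 0 ≤ (N u ^ 2 * (1 - K)) * (s + 1) ^ 2 :=
        mul_nonneg (mul_nonneg hA (by linarith)) (sq_nonneg _)
      nlinarith [hint1, hint2]
  · -- generic case: the line m + t • u avoids 0
    have hnep : ∀ t : ℝ, m + t • u ≠ 0 := by
      intro t h
      apply hmu
      refine ⟨-t, ?_⟩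
      have h2 : m = -(t • u) := eq_neg_of_add_eq_zero_left h
      rw [h2]; module
    have hnem : ∀ t : ℝ, m + t • (-u) ≠ 0 := by
      intro t h
      apply hmu
      refine ⟨t, ?_⟩
      have h2 : m = -(t • (-u)) := eq_neg_of_add_eq_zero_left h
      rw [h2]; module
    set A : ℝ := N u ^ 2 with hAdef
    set φ : ℝ → ℝ := fun t =>
      N (m + t • u) ^ 2 / 2 + N (m + t • (-u)) ^ 2 / 2 - N m ^ 2 - K * A * t ^ 2 with hφdef
    set Dφ : ℝ → ℝ := fun t =>
      DN (m + t • u) u + DN (m + t • (-u)) (-u) - 2 * K * A * t with hDφdef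
    set DDφ : ℝ → ℝ := fun t =>
      g (m + t • u) u u + g (m + t • (-u)) (-u) (-u) - 2 * K * A with hDDφdef
    have hDφat : ∀ t : ℝ, HasDerivAt φ (Dφ t) t := by
      intro t
      have d1 := mylineDerivF hD (x := m) (v := u) (t := t) (hnep t)
      have d2 := mylineDerivF hD (x := m) (v := -u) (t := t) (hnem t)
      have d3 : HasDerivAt (fun t : ℝ => K * A * t ^ 2) (2 * K * A * t) t := by
        have := ((hasDerivAt_pow 2 t).const_mul (K * A))
        refine this.congr_deriv ?_
        ring
      have := ((d1.add d2).sub_const (N m ^ 2)).sub d3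
      simpa [hφdef, hDφdef, Pi.sub_def, Pi.add_def] using this
    have hDDφat : ∀ t : ℝ, HasDerivAt Dφ (DDφ t) t := by
      intro t
      have d1 : HasDerivAt (fun s : ℝ => DN (m + s • u) u) (g (m + t • u) u u) t := by
        have := (mylineDerivDN hg (x := m) (v := u) (t := t) (hnep t)).clm_apply
          (hasDerivAt_const t u)
        simpa using this
      have d2 : HasDerivAt (fun s : ℝ => DN (m + s • (-u)) (-u))
          (g (m + t • (-u)) (-u) (-u)) t := by
        have := (mylineDerivDN hg (x := m) (v := -u) (t := t) (hnem t)).clm_apply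
          (hasDerivAt_const t (-u))
        simpa using this
      have d3 : HasDerivAt (fun t : ℝ => 2 * K * A * t) (2 * K * A) t := by
        simpa using (hasDerivAt_id t).const_mul (2 * K * A)
      have := (d1.add d2).sub d3
      simpa [hDφdef, hDDφdef, Pi.sub_def, Pi.add_def] using this
    have hDDnonneg : ∀ t : ℝ, 0 ≤ DDφ t := by
      intro t
      have e1 := hKg (m + t • u) (hnep t) u
      have e2 := hKg (m + t • (-u)) (hnem t) u
      have e3 : g (m + t • (-u)) (-u) (-u) = g (m + t • (-u)) u u := by simp
      have e4 : DDφ t = g (m + t • u) u u + g (m + t • (-u)) (-u) (-u) - 2 * K * A := rfl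
      rw [e4, e3, hAdef]
      linarith [e1, e2]
    have hDφ0 : Dφ 0 = 0 := by
      simp [hDφdef]
    have hDφmono : Monotone Dφ :=
      monotone_of_deriv_nonneg (fun t => (hDDφat t).differentiableAt)
        (fun t => by rw [(hDDφat t).deriv]; exact hDDnonneg t)
    have hDφnonneg : ∀ t : ℝ, 0 ≤ t → 0 ≤ Dφ t := by
      intro t ht
      rw [← hDφ0]
      exact hDφmono ht
    have hφmono : MonotoneOn φ (Set.Icc 0 1) := by
      apply monotoneOn_of_deriv_nonneg (convex_Icc 0 1)
      · exact fun t _ => ((hDφat t).continuousAt).continuousWithinAt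
      · exact fun t _ => ((hDφat t).differentiableAt).differentiableWithinAt
      · intro t ht
        rw [(hDφat t).deriv]
        exact hDφnonneg t (le_of_lt (by simpa using (Set.mem_Ioo.mp (by simpa using ht)).1))
    have hφ01 : φ 0 ≤ φ 1 := hφmono (by simp) (by norm_num) (by norm_num)
    have hφ0 : φ 0 = 0 := by simp [hφdef]
    rw [hφ0] at hφ01
    rw [hφdef] at hφ01
    simp only [one_smul, one_pow, mul_one] at hφ01
    have hm1 : m + u = m + u := rfl
    have hm2 : m + -u = m - u := by module
    rw [hm2] at hφ01
    have hAK : K * A = K * N u ^ 2 := by rw [hAdef]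
    nlinarith [hφ01]

end aux4



section aux5
variable {E : Type*} [NormedAddCommGroup E] [NormedSpace ℝ E]
variable {N : E → ℝ} {DN : E → (E →L[ℝ] ℝ)} {g : E → (E →L[ℝ] E →L[ℝ] ℝ)}

lemma mylineDerivF2 (hD : ∀ x, x ≠ 0 → HasFDerivAt (fun y => N y ^ 2 / 2) (DN x) x)
    {x v : E} {t : ℝ} (h : x + t • v ≠ 0) :
    HasDerivAt (fun s : ℝ => N (x + s • v) ^ 2 / 2) (DN (x + t • v) v) t := by
  have h1 : HasDerivAt (fun s : ℝ => x + s • v) v t := by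
    simpa using ((hasDerivAt_id t).smul_const v).const_add x
  have h2 := (hD _ h).comp_hasDerivAt t h1
  exact h2

lemma mylineDerivDN2 (hg : ∀ x, x ≠ 0 → HasFDerivAt DN (g x) x)
    {x v : E} {t : ℝ} (h : x + t • v ≠ 0) :
    HasDerivAt (fun s : ℝ => DN (x + s • v)) (g (x + t • v) v) t := by
  have h1 : HasDerivAt (fun s : ℝ => x + s • v) v t := by
    simpa using ((hasDerivAt_id t).smul_const v).const_add x
  have h2 := (hg _ h).comp_hasDerivAt t h1
  exact h2

lemma mysmoothglobal
    (hhom : ∀ c : ℝ, 0 < c → ∀ x, N (c • x) = c * N x)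
    (hnonneg : ∀ x, 0 ≤ N x)
    (hD : ∀ x, x ≠ 0 → HasFDerivAt (fun y => N y ^ 2 / 2) (DN x) x)
    (hg : ∀ x, x ≠ 0 → HasFDerivAt DN (g x) x)
    (hN0 : N 0 = 0)
    (hgself : ∀ z : E, z ≠ 0 → g z z z = N z ^ 2)
    {K : ℝ} (hK1 : 1 ≤ K)
    (hKg : ∀ z, z ≠ 0 → ∀ u : E, g z u u ≤ K * N u ^ 2) :
    ∀ m u : E, N (m + u) ^ 2 / 2 + N (m - u) ^ 2 / 2 ≤ N m ^ 2 + K * N u ^ 2 := by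
  intro m u
  have hK0 : (0:ℝ) ≤ K := by linarith
  by_cases hu : u = 0
  · subst hu
    simp [hN0]
  by_cases hmu : ∃ s : ℝ, m = s • u
  · obtain ⟨s, rfl⟩ := hmu
    have hA : (0:ℝ) ≤ N u ^ 2 := sq_nonneg _
    have hFpos : ∀ c : ℝ, 0 ≤ c → N (c • u) ^ 2 = c ^ 2 * N u ^ 2 := by
      intro c hc
      rcases eq_or_lt_of_le hc with h | h
      · rw [← h]; simp [hN0]
      · rw [hhom c h u]; ring
    have hFneg : ∀ c : ℝ, c ≤ 0 → N (c • u) ^ 2 = c ^ 2 * N (-u) ^ 2 := by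
      intro c hc
      rcases eq_or_lt_of_le hc with h | h
      · rw [h]; simp [hN0]
      · have hcu : c • u = (-c) • (-u) := by module
        rw [hcu, hhom (-c) (by linarith) (-u)]; ring
    have hgneg : ∀ z : E, g z (-u) (-u) = g z u u := by
      intro z; simp
    have hKub : N (-u) ^ 2 ≤ K * N u ^ 2 := by
      have h1 := hKg (-u) (neg_ne_zero.mpr hu) u
      have h2 := hgself (-u) (neg_ne_zero.mpr hu)
      rw [← hgneg (-u)] at h1
      rw [h2] at h1
      exact h1
    have h1 : s • u + u = (s + 1) • u := by module
    have h2 : s • u - u = (s - 1) • u := by module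
    rw [h1, h2]
    rcases le_or_gt 1 s with hs | hs
    · rw [hFpos s (by linarith), hFpos (s+1) (by linarith), hFpos (s-1) (by linarith)]
      nlinarith [mul_nonneg (sub_nonneg.mpr hK1) hA]
    rcases le_or_gt s (-1) with hs' | hs'
    · rw [hFneg s (by linarith), hFneg (s+1) (by linarith), hFneg (s-1) (by linarith)]
      nlinarith
    rcases le_or_gt 0 s with hs0 | hs0
    · rw [hFpos s hs0, hFpos (s+1) (by linarith), hFneg (s-1) (by linarith)]
      have hint1 : 0 ≤ (s - 1) ^ 2 * (K * N u ^ 2 - N (-u) ^ 2) :=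
        mul_nonneg (sq_nonneg _) (by linarith)
      have h1p : (0:ℝ) ≤ 1 + 2 * s - s ^ 2 := by nlinarith
      have hint2 : 0 ≤ (N u ^ 2 * (K - 1)) * (1 + 2 * s - s ^ 2) :=
        mul_nonneg (mul_nonneg hA (by linarith)) h1p
      nlinarith [hint1, hint2]
    · rw [hFneg s (by linarith), hFpos (s+1) (by linarith), hFneg (s-1) (by linarith)]
      have h2p : (0:ℝ) ≤ 1 - 2 * s - s ^ 2 := by nlinarith
      have hint1 : 0 ≤ (1 - 2 * s - s ^ 2) * (K * N u ^ 2 - N (-u) ^ 2) :=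
        mul_nonneg h2p (by linarith)
      have hint2 : 0 ≤ (N u ^ 2 * (K - 1)) * (s + 1) ^ 2 :=
        mul_nonneg (mul_nonneg hA (by linarith)) (sq_nonneg _)
      nlinarith [hint1, hint2]
  · have hnep : ∀ t : ℝ, m + t • u ≠ 0 := by
      intro t h
      apply hmu
      refine ⟨-t, ?_⟩
      have h2 : m = -(t • u) := eq_neg_of_add_eq_zero_left h
      rw [h2]; module
    have hnem : ∀ t : ℝ, m + t • (-u) ≠ 0 := by
      intro t h
      apply hmu
      refine ⟨t, ?_⟩
      have h2 : m = -(t • (-u)) := eq_neg_of_add_eq_zero_left h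
      rw [h2]; module
    set A : ℝ := N u ^ 2 with hAdef
    set φ : ℝ → ℝ := fun t =>
      N m ^ 2 + K * A * t ^ 2 - N (m + t • u) ^ 2 / 2 - N (m + t • (-u)) ^ 2 / 2 with hφdef
    set Dφ : ℝ → ℝ := fun t =>
      2 * K * A * t - DN (m + t • u) u - DN (m + t • (-u)) (-u) with hDφdef
    set DDφ : ℝ → ℝ := fun t =>
      2 * K * A - g (m + t • u) u u - g (m + t • (-u)) (-u) (-u) with hDDφdef
    have hDφat : ∀ t : ℝ, HasDerivAt φ (Dφ t) t := by
      intro t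
      have d1 := mylineDerivF2 hD (x := m) (v := u) (t := t) (hnep t)
      have d2 := mylineDerivF2 hD (x := m) (v := -u) (t := t) (hnem t)
      have d3 : HasDerivAt (fun t : ℝ => N m ^ 2 + K * A * t ^ 2) (2 * K * A * t) t := by
        have := ((hasDerivAt_pow 2 t).const_mul (K * A)).const_add (N m ^ 2)
        refine this.congr_deriv ?_
        ring
      have := (d3.sub d1).sub d2
      simpa [hφdef, hDφdef, Pi.sub_def, Pi.add_def] using this
    have hDDφat : ∀ t : ℝ, HasDerivAt Dφ (DDφ t) t := by
      intro t
      have d1 : HasDerivAt (fun s : ℝ => DN (m + s • u) u) (g (m + t • u) u u) t := by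
        have := (mylineDerivDN2 hg (x := m) (v := u) (t := t) (hnep t)).clm_apply
          (hasDerivAt_const t u)
        simpa using this
      have d2 : HasDerivAt (fun s : ℝ => DN (m + s • (-u)) (-u))
          (g (m + t • (-u)) (-u) (-u)) t := by
        have := (mylineDerivDN2 hg (x := m) (v := -u) (t := t) (hnem t)).clm_apply
          (hasDerivAt_const t (-u))
        simpa using this
      have d3 : HasDerivAt (fun t : ℝ => 2 * K * A * t) (2 * K * A) t := by
        simpa using (hasDerivAt_id t).const_mul (2 * K * A)
      have := (d3.sub d1).sub d2
      simpa [hDφdef, hDDφdef, Pi.sub_def, Pi.add_def] using this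
    have hDDnonneg : ∀ t : ℝ, 0 ≤ DDφ t := by
      intro t
      have e1 := hKg (m + t • u) (hnep t) u
      have e2 := hKg (m + t • (-u)) (hnem t) u
      have e3 : g (m + t • (-u)) (-u) (-u) = g (m + t • (-u)) u u := by simp
      have e4 : DDφ t = 2 * K * A - g (m + t • u) u u - g (m + t • (-u)) (-u) (-u) := rfl
      rw [e4, e3, hAdef]
      linarith [e1, e2]
    have hDφ0 : Dφ 0 = 0 := by
      simp [hDφdef]
    have hDφmono : Monotone Dφ :=
      monotone_of_deriv_nonneg (fun t => (hDDφat t).differentiableAt)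
        (fun t => by rw [(hDDφat t).deriv]; exact hDDnonneg t)
    have hDφnonneg : ∀ t : ℝ, 0 ≤ t → 0 ≤ Dφ t := by
      intro t ht
      rw [← hDφ0]
      exact hDφmono ht
    have hφmono : MonotoneOn φ (Set.Icc 0 1) := by
      apply monotoneOn_of_deriv_nonneg (convex_Icc 0 1)
      · exact fun t _ => ((hDφat t).continuousAt).continuousWithinAt
      · exact fun t _ => ((hDφat t).differentiableAt).differentiableWithinAt
      · intro t ht
        rw [(hDφat t).deriv]
        exact hDφnonneg t (le_of_lt (by simpa using (Set.mem_Ioo.mp (by simpa using ht)).1))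
    have hφ01 : φ 0 ≤ φ 1 := hφmono (by simp) (by norm_num) (by norm_num)
    have hφ0 : φ 0 = 0 := by simp [hφdef]; ring
    rw [hφ0] at hφ01
    rw [hφdef] at hφ01
    simp only [one_smul, one_pow, mul_one] at hφ01
    have hm2 : m + -u = m - u := by module
    rw [hm2] at hφ01
    have hAK : K * A = K * N u ^ 2 := by rw [hAdef]
    nlinarith [hφ01]

end aux5



set_option maxHeartbeats 1000000 in
/-- For a strongly convex Minkowski norm `N` on ℝⁿ with approximating inner
products `g x` (the Hessian of `N²/2`), the least 2-uniform convexity constant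
equals `sup ‖y‖/√(gₓ(y,y))` and the least 2-uniform smoothness constant
equals `sup √(gₓ(y,y))/‖y‖`. -/
theorem stmt_2 {n : ℕ}
    (N : EuclideanSpace ℝ (Fin n) → ℝ)
    (DN : EuclideanSpace ℝ (Fin n) → (EuclideanSpace ℝ (Fin n) →L[ℝ] ℝ))
    (g : EuclideanSpace ℝ (Fin n) →
      (EuclideanSpace ℝ (Fin n) →L[ℝ] EuclideanSpace ℝ (Fin n) →L[ℝ] ℝ))
    (hnonneg : ∀ x, 0 ≤ N x)
    (hhom : ∀ c : ℝ, 0 < c → ∀ x, N (c • x) = c * N x)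
    (hD : ∀ x, x ≠ 0 → HasFDerivAt (fun y => N y ^ 2 / 2) (DN x) x)
    (hg : ∀ x, x ≠ 0 → HasFDerivAt DN (g x) x)
    (hell : ∃ lam Lam : ℝ, 0 < lam ∧ 0 < Lam ∧ ∀ x, x ≠ 0 →
      ∀ v, lam * ‖v‖ ^ 2 ≤ g x v v ∧ g x v v ≤ Lam * ‖v‖ ^ 2)
    (C S : ℝ)
    (hC : IsLeast {c : ℝ | 0 < c ∧ ∀ x y,
      N ((2⁻¹ : ℝ) • (x + y)) ^ 2 ≤
        (1 / 2) * N x ^ 2 + (1 / 2) * N y ^ 2 - (1 / (4 * c ^ 2)) * N (x - y) ^ 2} C)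
    (hS : IsLeast {s : ℝ | 0 < s ∧ ∀ x y,
      (1 / 2) * N x ^ 2 + (1 / 2) * N y ^ 2 - (s ^ 2 / 4) * N (x - y) ^ 2 ≤
        N ((2⁻¹ : ℝ) • (x + y)) ^ 2} S) :
    C = sSup {r : ℝ | ∃ x, x ≠ 0 ∧ ∃ y, y ≠ 0 ∧ r = N y / Real.sqrt (g x y y)} ∧
    S = sSup {r : ℝ | ∃ x, x ≠ 0 ∧ ∃ y, y ≠ 0 ∧ r = Real.sqrt (g x y y) / N y} := by
  obtain ⟨lam, Lam, hlam, hLam, helli⟩ := hell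
  obtain ⟨⟨hCpos, hCin⟩, hClb⟩ := hC
  obtain ⟨⟨hSpos, hSin⟩, hSlb⟩ := hS
  have hN0 : N 0 = 0 := myN0 hhom
  have hgself : ∀ z, z ≠ 0 → g z z z = N z ^ 2 := fun z hz => mygself hhom hD hg hz
  have gpos : ∀ x, x ≠ 0 → ∀ y, y ≠ 0 → 0 < g x y y := by
    intro x hx y hy
    have h1 := (helli x hx y).1
    have h2 : 0 < ‖y‖ := norm_pos_iff.mpr hy
    nlinarith [mul_pos hlam (pow_pos h2 2)]
  have Npos : ∀ x, x ≠ 0 → 0 < N x := by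
    intro x hx
    have h1 : 0 < N x ^ 2 := by rw [← hgself x hx]; exact gpos x hx x hx
    rcases eq_or_lt_of_le (hnonneg x) with h | h
    · exfalso; rw [← h] at h1; simp at h1
    · exact h
  -- there is a nonzero vector
  have hx₀ : ∃ x₀ : EuclideanSpace ℝ (Fin n), x₀ ≠ 0 := by
    by_contra hcon
    push_neg at hcon
    have hhalf : (C / 2) ∈ {c : ℝ | 0 < c ∧ ∀ x y,
        N ((2⁻¹ : ℝ) • (x + y)) ^ 2 ≤
          (1 / 2) * N x ^ 2 + (1 / 2) * N y ^ 2 - (1 / (4 * c ^ 2)) * N (x - y) ^ 2} := by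
      refine ⟨by linarith, fun x y => ?_⟩
      rw [hcon x, hcon y]
      simp [hN0]
    have := hClb hhalf
    linarith
  obtain ⟨x₀, hx₀⟩ := hx₀
  -- direction 1 : any admissible constant bounds the ratios
  have hconv_ratio : ∀ c : ℝ, 0 < c → (∀ x y,
      N ((2⁻¹ : ℝ) • (x + y)) ^ 2 ≤
        (1 / 2) * N x ^ 2 + (1 / 2) * N y ^ 2 - (1 / (4 * c ^ 2)) * N (x - y) ^ 2) →
      ∀ x, x ≠ 0 → ∀ y, y ≠ 0 → N y / Real.sqrt (g x y y) ≤ c := by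
    intro c hc hcin x hx y hy
    have hQ := mysecdiff hD hg (x := x) (y := y) hx
    have hev : ∀ᶠ t in nhdsWithin (0:ℝ) (Set.Ioi 0),
        N y ^ 2 / c ^ 2 ≤ (N (x + t • y) ^ 2 / 2 + N (x - t • y) ^ 2 / 2 - N x ^ 2) / t ^ 2 := by
      filter_upwards [self_mem_nhdsWithin] with t ht
      have ht0 : (0:ℝ) < t := ht
      have hineq := hcin (x + t • y) (x - t • y)
      have e1 : (2⁻¹ : ℝ) • ((x + t • y) + (x - t • y)) = x := by module
      have e2 : (x + t • y) - (x - t • y) = (2 * t) • y := by module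
      rw [e1, e2, hhom (2 * t) (by linarith) y] at hineq
      rw [le_div_iff₀ (by positivity : (0:ℝ) < t ^ 2)]
      have e3 : (1 / (4 * c ^ 2)) * ((2 * t) * N y) ^ 2 = N y ^ 2 / c ^ 2 * t ^ 2 := by
        field_simp
        ring
      linarith [hineq, e3.symm.le, e3.le]
    have hlim : N y ^ 2 / c ^ 2 ≤ g x y y := ge_of_tendsto hQ hev
    have h2 : N y ^ 2 ≤ c ^ 2 * g x y y := by
      have := (div_le_iff₀ (by positivity : (0:ℝ) < c ^ 2)).mp hlim
      nlinarith [this]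
    have hgp := gpos x hx y hy
    have h3 : N y ≤ c * Real.sqrt (g x y y) := by
      calc N y = Real.sqrt (N y ^ 2) := (Real.sqrt_sq (hnonneg y)).symm
      _ ≤ Real.sqrt (c ^ 2 * g x y y) := Real.sqrt_le_sqrt h2
      _ = c * Real.sqrt (g x y y) := by
          rw [Real.sqrt_mul (sq_nonneg c), Real.sqrt_sq hc.le]
    rw [div_le_iff₀ (Real.sqrt_pos.mpr hgp)]
    exact h3
  have hsmooth_ratio : ∀ s : ℝ, 0 < s → (∀ x y,
      (1 / 2) * N x ^ 2 + (1 / 2) * N y ^ 2 - (s ^ 2 / 4) * N (x - y) ^ 2 ≤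
        N ((2⁻¹ : ℝ) • (x + y)) ^ 2) →
      ∀ x, x ≠ 0 → ∀ y, y ≠ 0 → Real.sqrt (g x y y) / N y ≤ s := by
    intro s hs hsin x hx y hy
    have hQ := mysecdiff hD hg (x := x) (y := y) hx
    have hev : ∀ᶠ t in nhdsWithin (0:ℝ) (Set.Ioi 0),
        (N (x + t • y) ^ 2 / 2 + N (x - t • y) ^ 2 / 2 - N x ^ 2) / t ^ 2 ≤ s ^ 2 * N y ^ 2 := by
      filter_upwards [self_mem_nhdsWithin] with t ht
      have ht0 : (0:ℝ) < t := ht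
      have hineq := hsin (x + t • y) (x - t • y)
      have e1 : (2⁻¹ : ℝ) • ((x + t • y) + (x - t • y)) = x := by module
      have e2 : (x + t • y) - (x - t • y) = (2 * t) • y := by module
      rw [e1, e2, hhom (2 * t) (by linarith) y] at hineq
      rw [div_le_iff₀ (by positivity : (0:ℝ) < t ^ 2)]
      have e3 : (s ^ 2 / 4) * ((2 * t) * N y) ^ 2 = s ^ 2 * N y ^ 2 * t ^ 2 := by
        field_simp
        ring
      linarith [hineq, e3.le, e3.symm.le]
    have hlim : g x y y ≤ s ^ 2 * N y ^ 2 := le_of_tendsto hQ hev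
    have hNy := Npos y hy
    have h3 : Real.sqrt (g x y y) ≤ s * N y := by
      calc Real.sqrt (g x y y) ≤ Real.sqrt (s ^ 2 * N y ^ 2) := Real.sqrt_le_sqrt hlim
      _ = s * N y := by
          rw [Real.sqrt_mul (sq_nonneg s), Real.sqrt_sq hs.le, Real.sqrt_sq (hnonneg y)]
    rw [div_le_iff₀ hNy]
    exact h3
  constructor
  · -- convexity constant
    set T : Set ℝ := {r : ℝ | ∃ x, x ≠ 0 ∧ ∃ y, y ≠ 0 ∧ r = N y / Real.sqrt (g x y y)} with hTdef
    have h1T : (1:ℝ) ∈ T := by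
      refine ⟨x₀, hx₀, x₀, hx₀, ?_⟩
      rw [hgself x₀ hx₀, Real.sqrt_sq (hnonneg x₀)]
      rw [div_self (ne_of_gt (Npos x₀ hx₀))]
    have hTub : ∀ r ∈ T, r ≤ C := by
      rintro r ⟨x, hx, y, hy, rfl⟩
      exact hconv_ratio C hCpos hCin x hx y hy
    have hTbdd : BddAbove T := ⟨C, hTub⟩
    set R : ℝ := sSup T with hRdef
    have hRC : R ≤ C := csSup_le ⟨1, h1T⟩ hTub
    have hR1 : 1 ≤ R := le_csSup hTbdd h1T
    have hR0 : 0 < R := by linarith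
    have hRg : ∀ z, z ≠ 0 → ∀ u, 1 / R ^ 2 * N u ^ 2 ≤ g z u u := by
      intro z hz u
      by_cases hu : u = 0
      · subst hu
        simp [hN0]
      · have hgzu := gpos z hz u hu
        have hr : N u / Real.sqrt (g z u u) ≤ R := le_csSup hTbdd ⟨z, hz, u, hu, rfl⟩
        have h1 : N u ≤ R * Real.sqrt (g z u u) := by
          rw [div_le_iff₀ (Real.sqrt_pos.mpr hgzu)] at hr
          exact hr
        have h2 : N u ^ 2 ≤ (R * Real.sqrt (g z u u)) ^ 2 :=
          pow_le_pow_left₀ (hnonneg u) h1 2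
        have h3 : (R * Real.sqrt (g z u u)) ^ 2 = R ^ 2 * g z u u := by
          rw [mul_pow, Real.sq_sqrt hgzu.le]
        rw [h3] at h2
        rw [div_mul_eq_mul_div, div_le_iff₀ (by positivity : (0:ℝ) < R ^ 2)]
        nlinarith [h2]
    have hRin : R ∈ {c : ℝ | 0 < c ∧ ∀ x y,
        N ((2⁻¹ : ℝ) • (x + y)) ^ 2 ≤
          (1 / 2) * N x ^ 2 + (1 / 2) * N y ^ 2 - (1 / (4 * c ^ 2)) * N (x - y) ^ 2} := by
      refine ⟨hR0, fun x y => ?_⟩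
      have hK1 : 1 / R ^ 2 ≤ 1 := by
        rw [div_le_one (by positivity : (0:ℝ) < R ^ 2)]
        nlinarith
      have hconv := myconvglobal hhom hnonneg hD hg hN0 hgself
        (by positivity : (0:ℝ) ≤ 1 / R ^ 2) hK1 hRg
        ((2⁻¹ : ℝ) • (x + y)) ((2⁻¹ : ℝ) • (x - y))
      have e1 : (2⁻¹ : ℝ) • (x + y) + (2⁻¹ : ℝ) • (x - y) = x := by module
      have e2 : (2⁻¹ : ℝ) • (x + y) - (2⁻¹ : ℝ) • (x - y) = y := by module
      rw [e1, e2] at hconv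
      have e3 : N (x - y) = 2 * N ((2⁻¹ : ℝ) • (x - y)) := by
        rw [← hhom 2 two_pos ((2⁻¹ : ℝ) • (x - y))]
        congr 1
        module
      have e4 : (1 / (4 * R ^ 2)) * N (x - y) ^ 2
          = 1 / R ^ 2 * N ((2⁻¹ : ℝ) • (x - y)) ^ 2 := by
        rw [e3]
        field_simp
        ring
      rw [e4]
      linarith [hconv]
    have hCR : C ≤ R := hClb hRin
    exact le_antisymm hCR hRC
  · -- smoothness constant
    set T' : Set ℝ := {r : ℝ | ∃ x, x ≠ 0 ∧ ∃ y, y ≠ 0 ∧ r = Real.sqrt (g x y y) / N y}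
      with hT'def
    have h1T' : (1:ℝ) ∈ T' := by
      refine ⟨x₀, hx₀, x₀, hx₀, ?_⟩
      rw [hgself x₀ hx₀, Real.sqrt_sq (hnonneg x₀)]
      rw [div_self (ne_of_gt (Npos x₀ hx₀))]
    have hT'ub : ∀ r ∈ T', r ≤ S := by
      rintro r ⟨x, hx, y, hy, rfl⟩
      exact hsmooth_ratio S hSpos hSin x hx y hy
    have hT'bdd : BddAbove T' := ⟨S, hT'ub⟩
    set R' : ℝ := sSup T' with hR'def
    have hR'S : R' ≤ S := csSup_le ⟨1, h1T'⟩ hT'ub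
    have hR'1 : 1 ≤ R' := le_csSup hT'bdd h1T'
    have hR'0 : 0 < R' := by linarith
    have hR'g : ∀ z, z ≠ 0 → ∀ u, g z u u ≤ R' ^ 2 * N u ^ 2 := by
      intro z hz u
      by_cases hu : u = 0
      · subst hu
        simp [hN0]
      · have hgzu := gpos z hz u hu
        have hNu := Npos u hu
        have hr : Real.sqrt (g z u u) / N u ≤ R' := le_csSup hT'bdd ⟨z, hz, u, hu, rfl⟩
        have h1 : Real.sqrt (g z u u) ≤ R' * N u := by
          rw [div_le_iff₀ hNu] at hr
          exact hr
        have h2 : Real.sqrt (g z u u) ^ 2 ≤ (R' * N u) ^ 2 :=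
          pow_le_pow_left₀ (Real.sqrt_nonneg _) h1 2
        rw [Real.sq_sqrt hgzu.le] at h2
        nlinarith [h2]
    have hR'in : R' ∈ {s : ℝ | 0 < s ∧ ∀ x y,
        (1 / 2) * N x ^ 2 + (1 / 2) * N y ^ 2 - (s ^ 2 / 4) * N (x - y) ^ 2 ≤
          N ((2⁻¹ : ℝ) • (x + y)) ^ 2} := by
      refine ⟨hR'0, fun x y => ?_⟩
      have hK1 : (1:ℝ) ≤ R' ^ 2 := by nlinarith
      have hsm := mysmoothglobal hhom hnonneg hD hg hN0 hgself hK1 hR'g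
        ((2⁻¹ : ℝ) • (x + y)) ((2⁻¹ : ℝ) • (x - y))
      have e1 : (2⁻¹ : ℝ) • (x + y) + (2⁻¹ : ℝ) • (x - y) = x := by module
      have e2 : (2⁻¹ : ℝ) • (x + y) - (2⁻¹ : ℝ) • (x - y) = y := by module
      rw [e1, e2] at hsm
      have e3 : N (x - y) = 2 * N ((2⁻¹ : ℝ) • (x - y)) := by
        rw [← hhom 2 two_pos ((2⁻¹ : ℝ) • (x - y))]
        congr 1
        module
      have e4 : (R' ^ 2 / 4) * N (x - y) ^ 2
          = R' ^ 2 * N ((2⁻¹ : ℝ) • (x - y)) ^ 2 := by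
        rw [e3]
        ring
      rw [e4]
      linarith [hsm]
    have hSR' : S ≤ R' := hSlb hR'in
    exact le_antisymm hSR' hR'S
end

section
/- In the normed space (ℝ², ‖·‖_∞), the function f(x) = ‖x‖_∞²/2 admits non-unique gradient curves in the metric sense: every curve ξ(t) = (e^{-t}, h(t)) with |h(t)| ≤ e^{-t} and |h'(t)| ≤ e^{-t} for all t ≥ 0 satisfies the energy dissipation identity characterizing metric gradient curves of f, i.e., f(ξ(s)) - f(ξ(t)) = (1/2)∫_s^t |ξ'|(r)² dr + (1/2)∫_s^t |∇f|(ξ(r))² dr for 0 ≤ s ≤ t, where |ξ'|(r) is the metric speed and |∇f| the local slope. -/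
open Filter Topology

/-- The local slope of `f` at `x`, `|∇f|(x) = limsup_{y→x} (f x - f y)⁺/‖y-x‖`. -/
noncomputable def localSlope (f : (Fin 2 → ℝ) → ℝ) (x : Fin 2 → ℝ) : ℝ :=
  Filter.limsup (fun y => max (f x - f y) 0 / ‖y - x‖) (nhdsWithin x {x}ᶜ)

/-- The curve `ξ` has metric speed `s` at time `t`. -/
def HasMetricSpeed (ξ : ℝ → (Fin 2 → ℝ)) (t s : ℝ) : Prop :=
  Filter.Tendsto (fun h : ℝ => ‖ξ (t + h) - ξ t‖ / |h|)
    (nhdsWithin 0 {(0 : ℝ)}ᶜ) (nhds s)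

lemma norm_fin2 (a b : ℝ) : ‖(![a,b] : Fin 2 → ℝ)‖ = max |a| |b| := by
  apply le_antisymm
  · apply pi_norm_le_iff_of_nonneg (le_max_of_le_left (abs_nonneg a)) |>.2
    intro i
    fin_cases i <;> simp [Real.norm_eq_abs]
  · exact max_le (by simpa using norm_le_pi_norm (![a,b] : Fin 2 → ℝ) 0)
      (by simpa using norm_le_pi_norm (![a,b] : Fin 2 → ℝ) 1)

lemma g_bound (x y : Fin 2 → ℝ) :
    max (‖x‖ ^ 2 / 2 - ‖y‖ ^ 2 / 2) 0 / ‖y - x‖ ≤ (‖x‖ + ‖y‖) / 2 := by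
  rcases eq_or_ne y x with rfl | hne
  · simp
  · have hpos : 0 < ‖y - x‖ := norm_pos_iff.2 (sub_ne_zero.2 hne)
    rw [div_le_iff₀ hpos]
    have key : ‖x‖ - ‖y‖ ≤ ‖y - x‖ := by
      have := norm_sub_norm_le x y
      rwa [norm_sub_rev] at this
    apply max_le
    · nlinarith [norm_nonneg x, norm_nonneg y,
        mul_le_mul_of_nonneg_left key (by positivity : (0:ℝ) ≤ ‖x‖ + ‖y‖)]
    · positivity

lemma localSlope_normsq (x : Fin 2 → ℝ) (hx : x ≠ 0) :
    localSlope (fun x => ‖x‖ ^ 2 / 2) x = ‖x‖ := by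
  unfold localSlope
  set g : (Fin 2 → ℝ) → ℝ := fun y => max (‖x‖ ^ 2 / 2 - ‖y‖ ^ 2 / 2) 0 / ‖y - x‖ with hgdef
  have hnx : 0 < ‖x‖ := norm_pos_iff.2 hx
  have hgnn : ∀ y, 0 ≤ g y := fun y => div_nonneg (le_max_right _ _) (norm_nonneg _)
  have hco : IsCoboundedUnder (· ≤ ·) (𝓝[≠] x) g :=
    isCoboundedUnder_le_of_le _ hgnn
  have hnormt : Tendsto (fun y : Fin 2 → ℝ => ‖y‖) (𝓝[≠] x) (𝓝 ‖x‖) :=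
    (continuous_norm.tendsto x).mono_left nhdsWithin_le_nhds
  have hbdd : IsBoundedUnder (· ≤ ·) (𝓝[≠] x) g := by
    refine ⟨‖x‖ + 1, eventually_map.2 ?_⟩
    filter_upwards [hnormt.eventually_le_const (by linarith : ‖x‖ < ‖x‖ + 2)] with y hy
    have := g_bound x y
    linarith
  apply le_antisymm
  · apply le_of_forall_pos_le_add
    intro ε hε
    apply limsup_le_of_le hco
    filter_upwards [hnormt.eventually_le_const (by linarith : ‖x‖ < ‖x‖ + 2 * ε)] with y hy
    have := g_bound x y
    linarith
  · apply le_of_forall_lt_imp_le_of_dense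
    intro c hc
    have hφ : Tendsto (fun ε : ℝ => (1 - ε) • x) (𝓝[>] (0:ℝ)) (𝓝[≠] x) := by
      rw [tendsto_nhdsWithin_iff]
      constructor
      · have hc2 : Continuous (fun ε : ℝ => (1 - ε) • x) :=
          (continuous_const.sub continuous_id).smul continuous_const
        have : Tendsto (fun ε : ℝ => (1 - ε) • x) (𝓝 (0:ℝ)) (𝓝 ((1 - (0:ℝ)) • x)) :=
          hc2.tendsto (0:ℝ)
        simpa using this.mono_left nhdsWithin_le_nhds
      · filter_upwards [self_mem_nhdsWithin] with ε (hεpos : 0 < ε)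
        simp only [Set.mem_compl_iff, Set.mem_singleton_iff]
        intro hcon
        have : (-ε) • x = 0 := by
          have : ((1 - ε) - 1) • x = 0 := by rw [sub_smul, hcon, one_smul, sub_self]
          simpa using this
        rcases smul_eq_zero.1 this with h0 | h0
        · exact absurd (neg_eq_zero.1 h0) (ne_of_gt hεpos)
        · exact hx h0
    have hcomp : Tendsto (fun ε : ℝ => g ((1 - ε) • x)) (𝓝[>] (0:ℝ)) (𝓝 ‖x‖) := by
      have heq : ∀ᶠ ε in 𝓝[>] (0:ℝ), ‖x‖ * (2 - ε) / 2 = g ((1 - ε) • x) := by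
        filter_upwards [Ioo_mem_nhdsGT one_pos] with ε hε
        obtain ⟨h0, h1⟩ := hε
        have e1 : ‖(1 - ε) • x‖ = (1 - ε) * ‖x‖ := by
          rw [norm_smul, Real.norm_eq_abs, abs_of_nonneg (by linarith)]
        have e2 : ‖(1 - ε) • x - x‖ = ε * ‖x‖ := by
          have : (1 - ε) • x - x = (-ε) • x := by module
          rw [this, norm_smul, Real.norm_eq_abs, abs_neg, abs_of_pos h0]
        rw [hgdef]
        simp only
        rw [e2, e1, max_eq_left (by
          nlinarith [mul_pos (mul_pos h0 (by linarith : (0:ℝ) < 2 - ε)) (mul_pos hnx hnx)])]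
        rw [eq_div_iff (by positivity)]
        field_simp
        ring
      have hlim : Tendsto (fun ε : ℝ => ‖x‖ * (2 - ε) / 2) (𝓝 (0:ℝ)) (𝓝 ‖x‖) := by
        have : Tendsto (fun ε : ℝ => ‖x‖ * (2 - ε) / 2) (𝓝 (0:ℝ)) (𝓝 (‖x‖ * (2 - 0) / 2)) := by
          apply Tendsto.div_const
          exact tendsto_const_nhds.mul (tendsto_const_nhds.sub tendsto_id)
        simpa using this
      exact (hlim.mono_left nhdsWithin_le_nhds).congr' heq
    have hfreq : ∃ᶠ y in 𝓝[≠] x, c ≤ g y :=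
      hφ.frequently ((hcomp.eventually_const_le hc).frequently)
    exact le_limsup_of_frequently_le hfreq hbdd

lemma speed_aux (h : ℝ → ℝ) (t : ℝ) (hd : DifferentiableAt ℝ h t)
    (hb : |deriv h t| ≤ Real.exp (-t)) :
    HasMetricSpeed (fun t => ![Real.exp (-t), h t]) t (Real.exp (-t)) := by
  unfold HasMetricSpeed
  have T1 : HasDerivAt (fun u : ℝ => Real.exp (-u)) (Real.exp (-t) * -1) t :=
    (hasDerivAt_neg t).exp
  have A1 : Tendsto (fun δ : ℝ => |δ⁻¹ * (Real.exp (-(t+δ)) - Real.exp (-t))|) (𝓝[≠] (0:ℝ))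
      (𝓝 (Real.exp (-t))) := by
    have := T1.tendsto_slope_zero.abs
    simpa [abs_mul] using this
  have A2 : Tendsto (fun δ : ℝ => |δ⁻¹ * (h (t+δ) - h t)|) (𝓝[≠] (0:ℝ)) (𝓝 |deriv h t|) :=
    hd.hasDerivAt.tendsto_slope_zero.abs
  have key := A1.max A2
  rw [max_eq_left hb] at key
  refine key.congr (fun δ => ?_)
  have hsub : (![Real.exp (-(t+δ)), h (t+δ)] : Fin 2 → ℝ) - ![Real.exp (-t), h t]
      = ![Real.exp (-(t+δ)) - Real.exp (-t), h (t+δ) - h t] := by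
    simp [Matrix.sub_cons]
  simp only [hsub, norm_fin2]
  rw [← max_div_div_right (abs_nonneg δ)]
  congr 1 <;> rw [abs_mul, abs_inv, inv_mul_eq_div]

/-- In `(ℝ², ‖·‖_∞)` (the sup norm on `Fin 2 → ℝ`), every curve
`ξ t = (e^{-t}, h t)` with `|h t| ≤ e^{-t}` and `|h' t| ≤ e^{-t}` satisfies the
energy dissipation identity characterizing metric gradient curves of
`f x = ‖x‖_∞²/2`; hence gradient curves of `f` are non-unique. -/
theorem stmt_6 (h : ℝ → ℝ)
    (hh : ∀ t, 0 ≤ t → |h t| ≤ Real.exp (-t))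
    (hdiff : ∀ t, 0 ≤ t → DifferentiableAt ℝ h t)
    (hh' : ∀ t, 0 ≤ t → |deriv h t| ≤ Real.exp (-t)) :
    ∃ ms : ℝ → ℝ,
      (∀ t, 0 ≤ t → HasMetricSpeed (fun t => ![Real.exp (-t), h t]) t (ms t)) ∧
      ∀ s t : ℝ, 0 ≤ s → s ≤ t →
        ‖(![Real.exp (-s), h s] : Fin 2 → ℝ)‖ ^ 2 / 2 -
          ‖(![Real.exp (-t), h t] : Fin 2 → ℝ)‖ ^ 2 / 2 =
        (1 / 2) * (∫ r in s..t, (ms r) ^ 2) +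
        (1 / 2) * (∫ r in s..t,
          (localSlope (fun x => ‖x‖ ^ 2 / 2) ![Real.exp (-r), h r]) ^ 2) := by
  refine ⟨fun r => Real.exp (-r), fun t ht => speed_aux h t (hdiff t ht) (hh' t ht), ?_⟩
  intro s t hs hst
  have ht : 0 ≤ t := hs.trans hst
  have hnorm : ∀ r, 0 ≤ r → ‖(![Real.exp (-r), h r] : Fin 2 → ℝ)‖ = Real.exp (-r) := by
    intro r hr
    rw [norm_fin2, abs_of_pos (Real.exp_pos _), max_eq_left (hh r hr)]
  have hsq : ∀ r : ℝ, Real.exp (-r) ^ 2 = Real.exp (-2 * r) := by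
    intro r; rw [sq, ← Real.exp_add]; ring_nf
  have hI : (∫ r in s..t, Real.exp (-r) ^ 2) = Real.exp (-2*s)/2 - Real.exp (-2*t)/2 := by
    have hF : ∀ r ∈ Set.uIcc s t,
        HasDerivAt (fun r : ℝ => -(Real.exp (-2*r)/2)) (Real.exp (-r) ^ 2) r := by
      intro r _
      have h1 : HasDerivAt (fun r : ℝ => (-2:ℝ) * r) (-2) r := by
        simpa using (hasDerivAt_id r).const_mul (-2:ℝ)
      have h2 : HasDerivAt (fun r : ℝ => -(Real.exp (-2*r)/2)) (-(Real.exp (-2 * r) * -2 / 2)) r :=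
        (h1.exp.div_const 2).neg
      convert h2 using 1
      rw [hsq]; ring
    have hint : IntervalIntegrable (fun r : ℝ => Real.exp (-r) ^ 2) MeasureTheory.volume s t :=
      (Continuous.pow (Real.continuous_exp.comp continuous_neg) 2).intervalIntegrable s t
    rw [intervalIntegral.integral_eq_sub_of_hasDerivAt hF hint]
    ring
  have hcong : (∫ r in s..t,
      (localSlope (fun x => ‖x‖ ^ 2 / 2) ![Real.exp (-r), h r]) ^ 2)
      = ∫ r in s..t, Real.exp (-r) ^ 2 := by
    apply intervalIntegral.integral_congr
    intro r hr
    rw [Set.uIcc_of_le hst] at hr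
    have hr0 : 0 ≤ r := hs.trans hr.1
    have hxne : (![Real.exp (-r), h r] : Fin 2 → ℝ) ≠ 0 := by
      intro hc
      have := hnorm r hr0
      rw [hc, norm_zero] at this
      exact absurd this.symm (ne_of_gt (Real.exp_pos _))
    simp only
    rw [localSlope_normsq _ hxne, hnorm r hr0]
  rw [hnorm s hs, hnorm t ht, hcong, hI, hsq s, hsq t]
  ring
end

section
/- In the normed space ℓ_p² = (ℝ², ‖·‖_p) with 2 < p < ∞, consider the unit vectors a = (−1, 0), b = (2^{−1/p}, 2^{−1/p}), c = (2^{−1/p}, −2^{−1/p}), and the triangle ABC with vertices A = (2^{1−1/p}, 0), B = (−1, −1−2^{1−1/p}), C = (−1, 1+2^{1−1/p}), whose edges BC, CA, AB are tangent to the unit sphere at a, b, c respectively. Then the vector |△OAB|·c + |△OBC|·a + |△OCA|·b equals (1 + 2^{1−1/p}) · (2^{1−2/p} − 1, 0), which is nonzero; here |△OXY| denotes the Lebesgue area of the triangle with vertices O, X, Y. -/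
/-- Twice the signless area of the triangle with vertices `O`, `X`, `Y`. -/
noncomputable def triAreaO (X Y : ℝ × ℝ) : ℝ := |X.1 * Y.2 - X.2 * Y.1| / 2

/-- In `ℓ_p² = (ℝ², ‖·‖_p)` with `2 < p < ∞`, for the triangle `ABC`
circumscribing the unit sphere with tangency points `a, b, c`, the vector
`|△OAB|·c + |△OBC|·a + |△OCA|·b` equals
`(1 + 2^{1-1/p}) • (2^{1-2/p} - 1, 0) ≠ 0`. -/
theorem stmt_7 (p : ℝ) (hp : 2 < p) :
    let a : ℝ × ℝ := (-1, 0)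
    let b : ℝ × ℝ := ((2 : ℝ) ^ (-1 / p), (2 : ℝ) ^ (-1 / p))
    let c : ℝ × ℝ := ((2 : ℝ) ^ (-1 / p), -((2 : ℝ) ^ (-1 / p)))
    let A : ℝ × ℝ := ((2 : ℝ) ^ (1 - 1 / p), 0)
    let B : ℝ × ℝ := (-1, -1 - (2 : ℝ) ^ (1 - 1 / p))
    let C : ℝ × ℝ := (-1, 1 + (2 : ℝ) ^ (1 - 1 / p))
    triAreaO A B • c + triAreaO B C • a + triAreaO C A • b =
      (1 + (2 : ℝ) ^ (1 - 1 / p)) • ((((2 : ℝ) ^ (1 - 2 / p) - 1 : ℝ), (0 : ℝ)) : ℝ × ℝ) ∧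
    (1 + (2 : ℝ) ^ (1 - 1 / p)) • ((((2 : ℝ) ^ (1 - 2 / p) - 1 : ℝ), (0 : ℝ)) : ℝ × ℝ) ≠ 0 := by
  intro a b c A B C
  have hp0 : (0:ℝ) < p := by linarith
  set u : ℝ := (2:ℝ) ^ (-1/p) with hu
  have hupos : 0 < u := Real.rpow_pos_of_pos (by norm_num) _
  have ht : (2:ℝ) ^ (1 - 1/p) = 2 * u := by
    rw [hu, show (1:ℝ)-1/p = 1 + (-1/p) by ring, Real.rpow_add (by norm_num),
      Real.rpow_one]
  have h2 : (2:ℝ) ^ (1 - 2/p) = 2 * u ^ 2 := by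
    rw [hu, show (1:ℝ)-2/p = 1 + (-1/p) + (-1/p) by ring, Real.rpow_add (by norm_num),
      Real.rpow_add (by norm_num), Real.rpow_one]
    ring
  have h2gt : 1 < (2:ℝ) ^ (1 - 2/p) := by
    apply Real.one_lt_rpow_iff_of_pos (by norm_num) |>.mpr
    left
    refine ⟨by norm_num, ?_⟩
    have : 2 / p < 1 := (div_lt_one hp0).mpr hp
    linarith
  have e1 : triAreaO A B = u * (1 + 2 * u) := by
    simp only [triAreaO, A, B, ht]
    rw [abs_of_nonpos (by nlinarith)]
    ring
  have e2 : triAreaO B C = 1 + 2 * u := by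
    simp only [triAreaO, B, C, ht]
    rw [abs_of_nonpos (by nlinarith)]
    ring
  have e3 : triAreaO C A = u * (1 + 2 * u) := by
    simp only [triAreaO, C, A, ht]
    rw [abs_of_nonpos (by nlinarith)]
    ring
  constructor
  · rw [e1, e2, e3]
    simp only [Prod.ext_iff, Prod.smul_fst, Prod.smul_snd, Prod.fst_add, Prod.snd_add,
      smul_eq_mul, a, b, c, ht, h2, Prod.mk.injEq]
    constructor <;> ring
  · intro h
    have hx := congrArg Prod.fst h
    simp only [Prod.smul_fst, smul_eq_mul, Prod.fst_zero] at hx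
    have h1 : (0:ℝ) < 1 + (2:ℝ) ^ (1 - 1/p) := by positivity
    rcases mul_eq_zero.mp hx with h' | h' <;> linarith
end

section
/- For each ε ∈ (0,1), let ‖·‖_ε be the Minkowski norm on ℝⁿ whose unit sphere is the Euclidean unit sphere centered at ((1−ε), 0, …, 0), i.e., ‖x‖_ε is the unique t > 0 with |x/t − (1−ε)e₁| = 1 where |·| is the Euclidean norm. Then the least constant c(ε) ≥ 1 such that some inner product ⟨·,·⟩ satisfies ‖y‖_ε² ≤ ⟨y,y⟩ ≤ c(ε)‖y‖_ε² for all y tends to infinity as ε → 0. -/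
/-- For the family of (nonsymmetric) Minkowski norms `N ε` on ℝⁿ whose unit
sphere is the Euclidean unit sphere centered at `(1-ε)e₁`, the least constant
`c(ε) ≥ 1` such that some inner product `B` satisfies
`N_ε(y)² ≤ B(y,y) ≤ c(ε) N_ε(y)²` tends to `∞` as `ε → 0⁺`. -/
theorem stmt_10 {n : ℕ} (hn : 0 < n)
    (N : ℝ → EuclideanSpace ℝ (Fin n) → ℝ)
    (hN0 : ∀ ε ∈ Set.Ioo (0 : ℝ) 1, N ε 0 = 0)
    (hN : ∀ ε ∈ Set.Ioo (0 : ℝ) 1, ∀ x : EuclideanSpace ℝ (Fin n), x ≠ 0 →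
      0 < N ε x ∧
      ‖(N ε x)⁻¹ • x - (1 - ε) • EuclideanSpace.single (⟨0, hn⟩ : Fin n) (1 : ℝ)‖ = 1 ∧
      ∀ t : ℝ, 0 < t →
        ‖t⁻¹ • x - (1 - ε) • EuclideanSpace.single (⟨0, hn⟩ : Fin n) (1 : ℝ)‖ = 1 →
        t = N ε x)
    (c : ℝ → ℝ)
    (hc : ∀ ε ∈ Set.Ioo (0 : ℝ) 1, IsLeast {k : ℝ | 1 ≤ k ∧
      ∃ B : EuclideanSpace ℝ (Fin n) →ₗ[ℝ] EuclideanSpace ℝ (Fin n) →ₗ[ℝ] ℝ,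
        (∀ x y, B x y = B y x) ∧
        ∀ y, N ε y ^ 2 ≤ B y y ∧ B y y ≤ k * N ε y ^ 2} (c ε)) :
    Filter.Tendsto c (nhdsWithin 0 (Set.Ioo 0 1)) Filter.atTop := by
  set e : EuclideanSpace ℝ (Fin n) := EuclideanSpace.single (⟨0, hn⟩ : Fin n) (1 : ℝ) with he
  have hnorme : ‖e‖ = 1 := by simp [he]
  have he0 : e ≠ 0 := fun h => by simp [h] at hnorme
  -- lower bound : c ε ≥ ε⁻¹ for ε ∈ Ioo 0 1
  have key : ∀ ε ∈ Set.Ioo (0 : ℝ) 1, ε⁻¹ ≤ c ε := by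
    intro ε hε
    obtain ⟨hε0, hε1⟩ := hε
    -- compute N ε e = (2 - ε)⁻¹
    have h2ε : (0 : ℝ) < 2 - ε := by linarith
    obtain ⟨-, -, huniq⟩ := hN ε ⟨hε0, hε1⟩ e he0
    have hNe : N ε e = (2 - ε)⁻¹ := by
      refine (huniq ((2 - ε)⁻¹) (by positivity) ?_).symm
      rw [inv_inv, ← sub_smul]
      have : (2 - ε) - (1 - ε) = 1 := by ring
      rw [this, one_smul, hnorme]
    -- compute N ε (-e) = ε⁻¹
    obtain ⟨-, -, huniq'⟩ := hN ε ⟨hε0, hε1⟩ (-e) (neg_ne_zero.mpr he0)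
    have hNne : N ε (-e) = ε⁻¹ := by
      refine (huniq' ε⁻¹ (by positivity) ?_).symm
      rw [inv_inv, smul_neg, ← neg_smul, ← sub_smul]
      have : -ε - (1 - ε) = -1 := by ring
      rw [this, neg_smul, one_smul, norm_neg, hnorme]
    -- use the bilinear form
    obtain ⟨⟨hc1, B, hsymm, hB⟩, -⟩ := hc ε ⟨hε0, hε1⟩
    have h1 : (ε⁻¹) ^ 2 ≤ B (-e) (-e) := by rw [← hNne]; exact (hB (-e)).1
    have h2 : B e e ≤ c ε * ((2 - ε)⁻¹) ^ 2 := by rw [← hNe]; exact (hB e).2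
    have hBB : B (-e) (-e) = B e e := by simp
    rw [hBB] at h1
    have hchain : (ε⁻¹) ^ 2 ≤ c ε * ((2 - ε)⁻¹) ^ 2 := le_trans h1 h2
    have hle : (ε⁻¹) ^ 2 * (2 - ε) ^ 2 ≤ c ε := by
      have h := mul_le_mul_of_nonneg_right hchain (sq_nonneg (2 - ε))
      have hcancel : (2 - ε)⁻¹ ^ 2 * (2 - ε) ^ 2 = 1 := by field_simp
      rwa [mul_assoc, hcancel, mul_one] at h
    have h1le : (1 : ℝ) ≤ (2 - ε) ^ 2 := by nlinarith
    have hin : ε * ε⁻¹ = 1 := mul_inv_cancel₀ hε0.ne'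
    have hipos : (0:ℝ) < ε⁻¹ := by positivity
    have hεinv1 : (1 : ℝ) ≤ ε⁻¹ := by nlinarith
    nlinarith [sq_nonneg (ε⁻¹ - 1)]
  have htend : Filter.Tendsto (fun ε : ℝ => ε⁻¹) (nhdsWithin 0 (Set.Ioo 0 1)) Filter.atTop :=
    tendsto_inv_nhdsGT_zero.mono_left (nhdsWithin_mono 0 Set.Ioo_subset_Ioi_self)
  refine Filter.tendsto_atTop_mono' _ ?_ htend
  filter_upwards [self_mem_nhdsWithin] with ε hε using key ε hε
end

section
/- Let ‖·‖ be a strongly convex Minkowski norm on ℝⁿ with Legendre transform L: ℝⁿ → (ℝⁿ)* (identified with ℝⁿ via the Euclidean inner product ⟨·,·⟩) and inverse L* = L^{−1}. There exists such a norm on ℝ² and a vector v ≠ 0 with ⟨L(v), L*(v)⟩ < 0. Consequently, for the Euclidean quadratic function f̃(x) = ⟨x,x⟩/2 (which is convex along straight lines), the skew-convexity expression g_v(v, ∇(−f̃)(0)) − g_v(v, ∇(−f̃)(−v)) = −⟨L(v), L*(v)⟩ is strictly positive, so f̃ is not 0-skew convex on (ℝ², ‖·‖). -/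
open scoped RealInnerProductSpace

namespace Stmt14Aux

noncomputable section

abbrev E := EuclideanSpace ℝ (Fin 2)

def a : E := (WithLp.equiv 2 _).symm ![4/5, 0]

lemma inner_a_apply (x : E) : ⟪a, x⟫ = 4/5 * x 0 := by
  simp [a, PiLp.inner_apply, Fin.sum_univ_two]; ring

lemma inner_aa : ⟪a, a⟫ = 16/25 := by
  rw [inner_a_apply]; norm_num [a]

lemma norm_a : ‖a‖ = 4/5 := by
  rw [show a = (WithLp.equiv 2 _).symm ![4/5, 0] from rfl, EuclideanSpace.norm_eq]
  norm_num [Fin.sum_univ_two]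

def N (x : E) : ℝ := ‖x‖ - ⟪a, x⟫

def L (x : E) : E := (N x / ‖x‖) • x - N x • a

lemma inner_a_le (x : E) : ⟪a, x⟫ ≤ 4/5 * ‖x‖ := by
  have h := real_inner_le_norm a x
  rwa [norm_a] at h

lemma N_nonneg (x : E) : 0 ≤ N x := by
  have h := inner_a_le x
  have h2 := norm_nonneg x
  simp only [N]; linarith

lemma N_pos {x : E} (hx : x ≠ 0) : 0 < N x := by
  have h := inner_a_le x
  have h2 : 0 < ‖x‖ := norm_pos_iff.2 hx
  simp only [N]; linarith

lemma N_zero : N 0 = 0 := by simp [N]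

lemma eq_zero_of_N_eq_zero {x : E} (h : N x = 0) : x = 0 := by
  by_contra hx
  exact absurd h (ne_of_gt (N_pos hx))

lemma L_zero : L 0 = 0 := by simp [L, N_zero]

lemma key (x : E) : L x + N x • a = (N x / ‖x‖) • x := by
  simp [L]

lemma norm_key (x : E) : ‖L x + N x • a‖ = N x := by
  rw [key]
  rcases eq_or_ne x 0 with rfl | hx
  · simp [N_zero]
  · have h2 : 0 < ‖x‖ := norm_pos_iff.2 hx
    rw [norm_smul, Real.norm_eq_abs, abs_of_nonneg (div_nonneg (N_nonneg x) h2.le)]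
    field_simp

lemma quad (x : E) : 9/25 * N x ^ 2 - 2 * ⟪a, L x⟫ * N x - ‖L x‖ ^ 2 = 0 := by
  have h : ‖L x + N x • a‖ ^ 2 = N x ^ 2 := by rw [norm_key]
  rw [norm_add_sq_real, real_inner_smul_right, norm_smul, Real.norm_eq_abs,
    abs_of_nonneg (N_nonneg x), mul_pow, norm_a, real_inner_comm a (L x)] at h
  nlinarith [h]

lemma cs (w : E) : ⟪a, w⟫ ^ 2 ≤ 16/25 * ‖w‖ ^ 2 := by
  have h := abs_real_inner_le_norm a w
  rw [norm_a] at h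
  nlinarith [abs_nonneg (⟪a, w⟫), sq_abs (⟪a, w⟫)]

lemma N_eq_of_L_eq {x y : E} (h : L x = L y) : N x = N y := by
  by_contra hne
  have q1 := quad x
  have q2 := quad y
  rw [← h] at q2
  have hfac : (N x - N y) * (9/25 * (N x + N y) - 2 * ⟪a, L x⟫) = 0 := by
    linear_combination q1 - q2
  have h2 : 9/25 * (N x + N y) - 2 * ⟪a, L x⟫ = 0 :=
    (mul_eq_zero.1 hfac).resolve_left (sub_ne_zero.2 hne)
  have hprod : 9/25 * (N x * N y) + ‖L x‖ ^ 2 = 0 := by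
    linear_combination N x * h2 - q1
  have hc0 : ‖L x‖ ^ 2 = 0 := by
    nlinarith [N_nonneg x, N_nonneg y, sq_nonneg ‖L x‖]
  have hb0 : ⟪a, L x⟫ = 0 := by
    have := cs (L x)
    nlinarith [sq_nonneg (⟪a, L x⟫)]
  have hx0 : N x = 0 := by nlinarith [N_nonneg x, N_nonneg y]
  have hy0 : N y = 0 := by nlinarith [N_nonneg x, N_nonneg y]
  exact hne (by rw [hx0, hy0])

lemma L_inj : Function.Injective L := by
  intro x y h
  have ht := N_eq_of_L_eq h
  rcases eq_or_lt_of_le (N_nonneg x) with ht0 | ht0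
  · rw [eq_zero_of_N_eq_zero ht0.symm, eq_zero_of_N_eq_zero (ht ▸ ht0.symm : N y = 0)]
  · have hx : x ≠ 0 := by
      intro h0; rw [h0, N_zero] at ht0; exact lt_irrefl 0 ht0
    have hy : y ≠ 0 := by
      intro h0; rw [h0, N_zero] at ht; rw [ht] at ht0; exact lt_irrefl 0 ht0
    have hnx : 0 < ‖x‖ := norm_pos_iff.2 hx
    have hny : 0 < ‖y‖ := norm_pos_iff.2 hy
    have hkx : ⟪a, L x⟫ + N x * (16/25) = N x / ‖x‖ * ⟪a, x⟫ := by
      have h1 : ⟪a, L x + N x • a⟫ = ⟪a, (N x / ‖x‖) • x⟫ := by rw [key]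
      rw [inner_add_right, real_inner_smul_right, real_inner_smul_right, inner_aa] at h1
      linear_combination h1
    have hky : ⟪a, L y⟫ + N y * (16/25) = N y / ‖y‖ * ⟪a, y⟫ := by
      have h1 : ⟪a, L y + N y • a⟫ = ⟪a, (N y / ‖y‖) • y⟫ := by rw [key]
      rw [inner_add_right, real_inner_smul_right, real_inner_smul_right, inner_aa] at h1
      linear_combination h1
    have hax : ⟪a, x⟫ = ‖x‖ - N x := by simp [N]
    have hay : ⟪a, y⟫ = ‖y‖ - N y := by simp [N]
    rw [hax] at hkx; rw [hay] at hky
    rw [← h, ← ht] at hky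
    have hxy : N x / ‖x‖ * (‖x‖ - N x) = N x / ‖y‖ * (‖y‖ - N x) := by
      rw [← hkx, ← hky]
    have hnorm : ‖x‖ = ‖y‖ := by
      field_simp at hxy
      have h3 : N x ^ 2 * ‖x‖ = N x ^ 2 * ‖y‖ := by linear_combination N x * hxy
      exact mul_left_cancel₀ (pow_ne_zero 2 (ne_of_gt ht0)) h3
    have hkey : L x + N x • a = L y + N y • a := by rw [h, ht]
    rw [key, key] at hkey
    rw [← ht, ← hnorm] at hkey
    have hc : N x / ‖x‖ ≠ 0 := ne_of_gt (div_pos ht0 hnx)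
    exact smul_right_injective E hc hkey

lemma L_surj : Function.Surjective L := by
  intro w
  rcases eq_or_ne w 0 with rfl | hw
  · exact ⟨0, L_zero⟩
  · set b := ⟪a, w⟫ with hb
    have hc : 0 < ‖w‖ ^ 2 := pow_pos (norm_pos_iff.2 hw) 2
    set s := Real.sqrt (b ^ 2 + 9/25 * ‖w‖ ^ 2) with hs
    have hs2 : s ^ 2 = b ^ 2 + 9/25 * ‖w‖ ^ 2 := Real.sq_sqrt (by positivity)
    have hspos : 0 < s := Real.sqrt_pos.2 (by nlinarith [sq_nonneg b])
    have hbs : b < s := by nlinarith [hspos, hs2, hc]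
    set t := 25/9 * (b + s) with ht
    have htpos : 0 < t := by rw [ht]; nlinarith
    set x : E := (t/s) • (w + t • a) with hxdef
    have hwt : ‖w + t • a‖ = t := by
      have h2 : ‖w + t • a‖ ^ 2 = t ^ 2 := by
        rw [norm_add_sq_real, real_inner_smul_right, norm_smul, Real.norm_eq_abs,
          abs_of_pos htpos, mul_pow, norm_a, real_inner_comm a w, ← hb, ht]
        linear_combination (-25/9) * hs2
      nlinarith [norm_nonneg (w + t • a), htpos]
    have hnx : ‖x‖ = t ^ 2 / s := by
      rw [hxdef, norm_smul, Real.norm_eq_abs, abs_of_pos (div_pos htpos hspos), hwt]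
      field_simp
    have haxx : ⟪a, x⟫ = t/s * (b + 16/25 * t) := by
      rw [hxdef, real_inner_smul_right, inner_add_right, real_inner_smul_right, inner_aa, ← hb]
      ring
    have hNx : N x = t := by
      rw [N, hnx, haxx]
      have h925 : 9/25 * t - b = s := by rw [ht]; ring
      field_simp
      linear_combination (t : ℝ) * h925
    refine ⟨x, ?_⟩
    rw [L, hNx, hnx, hxdef, smul_smul]
    have h1 : t / (t ^ 2 / s) * (t / s) = 1 := by field_simp
    rw [h1, one_smul, add_sub_cancel_right]

def Lstar : E → E := Function.invFun L

lemma Lstar_L (x : E) : Lstar (L x) = x := Function.leftInverse_invFun L_inj x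

lemma L_Lstar (x : E) : L (Lstar x) = x := Function.invFun_eq (L_surj x)

lemma N_smul (c : ℝ) (hc : 0 < c) (x : E) : N (c • x) = c * N x := by
  simp only [N, norm_smul, Real.norm_eq_abs, abs_of_pos hc, real_inner_smul_right]
  ring

lemma N_add (x y : E) : N (x + y) ≤ N x + N y := by
  have h := norm_add_le x y
  simp only [N, inner_add_right]; linarith

lemma N_add_lt (x y : E) (h : ¬∃ t : ℝ, y = t • x ∨ x = t • y) :
    N (x + y) < N x + N y := by
  have hs : ¬ SameRay ℝ x y := by
    intro hsr
    rcases hsr with h0 | h0 | ⟨r, s', hr, hs', hrs⟩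
    · exact h ⟨0, Or.inr (by rw [h0, zero_smul])⟩
    · exact h ⟨0, Or.inl (by rw [h0, zero_smul])⟩
    · refine h ⟨s'⁻¹ * r, Or.inl ?_⟩
      rw [mul_smul, hrs, smul_smul, inv_mul_cancel₀ hs'.ne', one_smul]
  have h2 := norm_add_lt_of_not_sameRay hs
  simp only [N, inner_add_right]; linarith

lemma inner_L_self (x : E) : ⟪L x, x⟫ = N x ^ 2 := by
  rcases eq_or_ne x 0 with rfl | hx
  · simp [L_zero, N_zero]
  · have hnx : 0 < ‖x‖ := norm_pos_iff.2 hx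
    have hax : ⟪a, x⟫ = ‖x‖ - N x := by simp [N]
    rw [L, inner_sub_left, real_inner_smul_left, real_inner_smul_left,
      real_inner_self_eq_norm_sq, hax]
    field_simp
    ring

lemma inner_L_le (x y : E) : ⟪L x, y⟫ ≤ N x * N y := by
  rcases eq_or_ne x 0 with rfl | hx
  · simp [L_zero, N_zero]
  · have hnx : 0 < ‖x‖ := norm_pos_iff.2 hx
    have hay : ⟪a, y⟫ = ‖y‖ - N y := by simp [N]
    rw [L, inner_sub_left, real_inner_smul_left, real_inner_smul_left, hay]
    have h1 : N x / ‖x‖ * ⟪x, y⟫ ≤ N x * ‖y‖ := by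
      have h2 := mul_le_mul_of_nonneg_left (real_inner_le_norm x y)
        (div_nonneg (N_nonneg x) hnx.le)
      have h3 : N x / ‖x‖ * (‖x‖ * ‖y‖) = N x * ‖y‖ := by field_simp
      linarith
    nlinarith [h1]

def v : E := (WithLp.equiv 2 _).symm ![0, 1]

def u' : E := (WithLp.equiv 2 _).symm ![100/27, 25/9]

lemma v_ne : v ≠ 0 := by
  intro h
  have h1 : v 1 = 0 := by rw [h]; rfl
  simp [v] at h1

lemma norm_v : ‖v‖ = 1 := by
  rw [show v = (WithLp.equiv 2 _).symm ![0, 1] from rfl, EuclideanSpace.norm_eq]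
  norm_num [Fin.sum_univ_two]

lemma N_v : N v = 1 := by
  rw [N, norm_v, inner_a_apply]
  norm_num [v]

lemma L_v : L v = v - a := by
  rw [L, N_v, norm_v]
  norm_num

lemma norm_u' : ‖u'‖ = 125/27 := by
  rw [show u' = (WithLp.equiv 2 _).symm ![100/27, 25/9] from rfl, EuclideanSpace.norm_eq]
  norm_num [Fin.sum_univ_two]

lemma N_u' : N u' = 5/3 := by
  rw [N, norm_u', inner_a_apply]
  norm_num [u']

lemma L_u' : L u' = v := by
  rw [L, N_u', norm_u']
  ext i
  fin_cases i <;>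
    simp [u', v, a, PiLp.smul_apply, PiLp.sub_apply] <;> norm_num

lemma Lstar_v : Lstar v = u' := by rw [← L_u', Lstar_L]

lemma final_inner : ⟪L v, Lstar v⟫ = -5/27 := by
  rw [L_v, Lstar_v, inner_sub_left, inner_a_apply]
  have h1 : ⟪v, u'⟫ = 25/9 := by
    simp [v, u', PiLp.inner_apply, Fin.sum_univ_two]
  rw [h1]
  norm_num [u']

end

end Stmt14Aux

/-- There exists a (strictly convex) Minkowski norm `N` on ℝ², with Legendre
transform `L` (identified with a map ℝ² → ℝ² via the Euclidean inner product)
and inverse `L* = L⁻¹`, and a vector `v ≠ 0` with `⟪L v, L* v⟫ < 0`.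
Consequently the skew-convexity expression
`g_v(v, ∇(-f̃)(0)) - g_v(v, ∇(-f̃)(-v)) = -⟪L v, L* v⟫` for the Euclidean
quadratic `f̃(x) = ⟪x,x⟫/2` is strictly positive, so `f̃` is not `0`-skew
convex on `(ℝ², N)`. -/
theorem stmt_14 :
    ∃ (N : EuclideanSpace ℝ (Fin 2) → ℝ)
      (L Lstar : EuclideanSpace ℝ (Fin 2) → EuclideanSpace ℝ (Fin 2)),
      (∀ x, 0 ≤ N x) ∧
      (∀ x, x ≠ 0 → 0 < N x) ∧
      (∀ c : ℝ, 0 < c → ∀ x, N (c • x) = c * N x) ∧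
      (∀ x y, N (x + y) ≤ N x + N y) ∧
      (∀ x y : EuclideanSpace ℝ (Fin 2),
        ¬(∃ t : ℝ, y = t • x ∨ x = t • y) → N (x + y) < N x + N y) ∧
      (∀ x, (inner ℝ (L x) x : ℝ) = N x ^ 2) ∧
      (∀ x y, (inner ℝ (L x) y : ℝ) ≤ N x * N y) ∧
      (∀ x, Lstar (L x) = x) ∧ (∀ x, L (Lstar x) = x) ∧
      ∃ v : EuclideanSpace ℝ (Fin 2), v ≠ 0 ∧
        (inner ℝ (L v) (Lstar v) : ℝ) < 0 ∧
        0 < -(inner ℝ (L v) (Lstar v) : ℝ) := by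
  refine ⟨Stmt14Aux.N, Stmt14Aux.L, Stmt14Aux.Lstar,
    Stmt14Aux.N_nonneg, fun x hx => Stmt14Aux.N_pos hx,
    Stmt14Aux.N_smul, Stmt14Aux.N_add, Stmt14Aux.N_add_lt,
    Stmt14Aux.inner_L_self, Stmt14Aux.inner_L_le,
    Stmt14Aux.Lstar_L, Stmt14Aux.L_Lstar,
    Stmt14Aux.v, Stmt14Aux.v_ne, ?_, ?_⟩ <;>
  rw [Stmt14Aux.final_inner] <;> norm_num
end
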